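/- arXiv:2112.12574 — 2 statements merged into one kernel-verified Lean document; each statement's English description precedes it below -/
import Mathlib

section
/- (Multivariate Esséen inequality) Let τ > 0 and let F be a probability measure on ℝ^d with characteristic function F̂. Then Q(F, τ) ≤ c(d) τ^d ∫_{|t| ≤ 1/τ} |F̂(t)| dt, where |t| = max_j |t_j| and c(d) > 0 depends only on d. -/
open MeasureTheory ProbabilityTheory Metric
open scoped BigOperators RealInnerProductSpace

noncomputable section

/-- The concentration function `Q(F, λ) = sup_x F(x + λB)`,
where `B` is the closed Euclidean ball of radius `1/2`. -/
def concQ {d : ℕ} (F : Measure (EuclideanSpace ℝ (Fin d))) (l : ℝ) : ℝ :=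
  ⨆ x : EuclideanSpace ℝ (Fin d), (F (closedBall x (l / 2))).toReal

/-- The characteristic function of a measure `F` on `ℝ^d`. -/
def charF {d : ℕ} (F : Measure (EuclideanSpace ℝ (Fin d))) (t : EuclideanSpace ℝ (Fin d)) : ℂ :=
  ∫ x, Complex.exp ((⟪t, x⟫ : ℂ) * Complex.I) ∂F

/-- The cube `{t : |t| ≤ T}`, where `|t| = max_j |t_j|`. -/
def cube (d : ℕ) (T : ℝ) : Set (EuclideanSpace ℝ (Fin d)) :=
  {t | ∀ j, |t j| ≤ T}

namespace Esseen

/-- triangular weight -/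
def w (T v : ℝ) : ℝ := max (1 - |v|/T) 0

lemma w_nonneg (T v : ℝ) : 0 ≤ w T v := le_max_right _ _

lemma w_le_one {T : ℝ} (hT : 0 < T) (v : ℝ) : w T v ≤ 1 := by
  unfold w
  have : 0 ≤ |v|/T := div_nonneg (abs_nonneg _) hT.le
  simp only [max_le_iff]
  constructor <;> linarith [zero_le_one (α := ℝ)]

lemma w_eq_zero {T v : ℝ} (hT : 0 < T) (h : T ≤ |v|) : w T v = 0 := by
  unfold w
  have : (1:ℝ) ≤ |v|/T := (one_le_div hT).2 h
  exact max_eq_right (by linarith)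

lemma w_eq {T v : ℝ} (hT : 0 < T) (h : |v| ≤ T) : w T v = 1 - |v|/T := by
  unfold w
  have : |v|/T ≤ 1 := (div_le_one hT).2 h
  exact max_eq_left (by linarith)

@[fun_prop]
lemma continuous_w (T : ℝ) : Continuous (w T) := by
  unfold w; fun_prop

lemma w_support {T : ℝ} (hT : 0 < T) : Function.support (w T) ⊆ Set.Ioc (-T) T := by
  intro v hv
  by_contra h
  apply hv
  rw [Set.mem_Ioc] at h
  push_neg at h
  rcases le_or_gt T |v| with h' | h'
  · exact w_eq_zero hT h'
  · exfalso
    rcases abs_lt.1 h' with ⟨h1, h2⟩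
    rcases lt_or_ge (-T) v with h3 | h3
    · exact absurd (h h3) (not_lt.2 h2.le)
    · linarith

lemma hcs_w {T : ℝ} (hT : 0 < T) : HasCompactSupport (w T) :=
  HasCompactSupport.of_support_subset_isCompact isCompact_Icc
    ((w_support hT).trans Set.Ioc_subset_Icc_self)

lemma integrable_w {T : ℝ} (hT : 0 < T) : Integrable (w T) :=
  (continuous_w T).integrable_of_hasCompactSupport (hcs_w hT)

/-- the one-dimensional Fejér-type kernel -/
def k1 (T u : ℝ) : ℝ := ∫ v : ℝ, w T v * Real.cos (v * u)

lemma integrable_w_cos {T : ℝ} (hT : 0 < T) (u : ℝ) :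
    Integrable (fun v => w T v * Real.cos (v * u)) := by
  apply Continuous.integrable_of_hasCompactSupport (by fun_prop)
  exact HasCompactSupport.mul_right (hcs_w hT)

lemma integrable_w_sin {T : ℝ} (hT : 0 < T) (u : ℝ) :
    Integrable (fun v => w T v * Real.sin (v * u)) := by
  apply Continuous.integrable_of_hasCompactSupport (by fun_prop)
  exact HasCompactSupport.mul_right (hcs_w hT)

lemma integral_w_sin {T : ℝ} (hT : 0 < T) (u : ℝ) :
    ∫ v : ℝ, w T v * Real.sin (v * u) = 0 := by
  have hsupp : Function.support (fun v => w T v * Real.sin (v * u)) ⊆ Set.Ioc (-T) T :=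
    (Function.support_mul_subset_left _ _).trans (w_support hT)
  rw [← intervalIntegral.integral_eq_integral_of_support_subset hsupp]
  have hint : ∀ a b : ℝ, IntervalIntegrable (fun v => w T v * Real.sin (v * u)) volume a b :=
    fun a b => (by fun_prop : Continuous fun v => w T v * Real.sin (v * u)).intervalIntegrable a b
  rw [← intervalIntegral.integral_add_adjacent_intervals (hint (-T) 0) (hint 0 T)]
  have : (∫ v in (-T)..(0:ℝ), w T v * Real.sin (v * u))
      = ∫ v in (0:ℝ)..T, w T (-v) * Real.sin (-v * u) := by
    rw [intervalIntegral.integral_comp_neg (f := fun v => w T v * Real.sin (v * u))]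
    norm_num
  rw [this]
  have heq : ∀ v : ℝ, w T (-v) * Real.sin (-v * u) = -(w T v * Real.sin (v * u)) := by
    intro v
    unfold w
    rw [abs_neg, neg_mul, Real.sin_neg]
    ring
  simp_rw [heq]
  rw [intervalIntegral.integral_neg]
  ring

lemma k1_eq_twice {T : ℝ} (hT : 0 < T) (u : ℝ) :
    k1 T u = 2 * ∫ v in (0:ℝ)..T, (1 - v/T) * Real.cos (v * u) := by
  unfold k1
  have hsupp : Function.support (fun v => w T v * Real.cos (v * u)) ⊆ Set.Ioc (-T) T :=
    (Function.support_mul_subset_left _ _).trans (w_support hT)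
  rw [← intervalIntegral.integral_eq_integral_of_support_subset hsupp]
  have hint : ∀ a b : ℝ, IntervalIntegrable (fun v => w T v * Real.cos (v * u)) volume a b :=
    fun a b => (by fun_prop : Continuous fun v => w T v * Real.cos (v * u)).intervalIntegrable a b
  rw [← intervalIntegral.integral_add_adjacent_intervals (hint (-T) 0) (hint 0 T)]
  have h1 : (∫ v in (-T)..(0:ℝ), w T v * Real.cos (v * u))
      = ∫ v in (0:ℝ)..T, w T (-v) * Real.cos (-v * u) := by
    rw [intervalIntegral.integral_comp_neg (f := fun v => w T v * Real.cos (v * u))]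
    norm_num
  have heq : ∀ v : ℝ, w T (-v) * Real.cos (-v * u) = w T v * Real.cos (v * u) := by
    intro v
    unfold w
    rw [abs_neg, neg_mul, Real.cos_neg]
  simp_rw [h1, heq]
  have h2 : (∫ v in (0:ℝ)..T, w T v * Real.cos (v * u))
      = ∫ v in (0:ℝ)..T, (1 - v/T) * Real.cos (v * u) := by
    apply intervalIntegral.integral_congr
    intro v hv
    rw [Set.uIcc_of_le hT.le] at hv
    have h0 : 0 ≤ v := hv.1
    have hvT : v ≤ T := hv.2
    show w T v * Real.cos (v * u) = _
    rw [w_eq hT (by rwa [abs_of_nonneg h0]), abs_of_nonneg h0]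
  rw [h2]; ring

lemma k1_zero {T : ℝ} (hT : 0 < T) : k1 T 0 = T := by
  rw [k1_eq_twice hT]
  have : ∀ v ∈ Set.uIcc (0:ℝ) T, (1 - v/T) * Real.cos (v * 0) = 1 - v/T := by
    intro v _; simp
  rw [intervalIntegral.integral_congr this]
  have hderiv : ∀ v ∈ Set.uIcc (0:ℝ) T,
      HasDerivAt (fun v : ℝ => v - v^2/(2*T)) (1 - v/T) v := by
    intro v _
    have h1 : HasDerivAt (fun v : ℝ => v^2) (2*v) v := by
      simpa [mul_comm] using (hasDerivAt_pow 2 v)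
    have := (hasDerivAt_id v).sub (h1.div_const (2*T))
    refine this.congr_deriv ?_
    ring
  rw [intervalIntegral.integral_eq_sub_of_hasDerivAt hderiv
    ((by fun_prop : Continuous fun v : ℝ => 1 - v/T).intervalIntegrable 0 T)]
  field_simp
  ring

lemma k1_eq {T : ℝ} (hT : 0 < T) {u : ℝ} (hu : u ≠ 0) :
    k1 T u = 2 * (1 - Real.cos (T * u)) / (T * u^2) := by
  rw [k1_eq_twice hT]
  set G : ℝ → ℝ := fun v => (1 - v/T) * (Real.sin (v*u) / u) - Real.cos (v*u)/(T*u^2) with hG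
  have hderiv : ∀ v ∈ Set.uIcc (0:ℝ) T, HasDerivAt G ((1 - v/T) * Real.cos (v * u)) v := by
    intro v _
    have h1 : HasDerivAt (fun v : ℝ => 1 - v/T) (-(1/T)) v := by
      simpa using ((hasDerivAt_id v).div_const T).const_sub 1
    have h2 : HasDerivAt (fun v : ℝ => Real.sin (v*u)) (Real.cos (v*u) * u) v := by
      simpa [Function.comp_def] using (Real.hasDerivAt_sin (v*u)).comp v ((hasDerivAt_id v).mul_const u)
    have h3 : HasDerivAt (fun v : ℝ => Real.cos (v*u)) (-Real.sin (v*u) * u) v := by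
      simpa [Function.comp_def] using (Real.hasDerivAt_cos (v*u)).comp v ((hasDerivAt_id v).mul_const u)
    have := ((h1.mul (h2.div_const u)).sub ((h3.div_const (T*u^2))))
    refine this.congr_deriv ?_
    field_simp
    ring
  have hcont : IntervalIntegrable (fun v => (1 - v/T) * Real.cos (v * u)) volume 0 T :=
    (by fun_prop : Continuous fun v : ℝ => (1 - v/T) * Real.cos (v * u)).intervalIntegrable 0 T
  rw [intervalIntegral.integral_eq_sub_of_hasDerivAt hderiv hcont]
  have : G T = -Real.cos (T*u)/(T*u^2) := by
    simp only [hG]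
    rw [div_self hT.ne']
    field_simp
    ring
  rw [this]
  simp only [hG]
  norm_num
  field_simp
  ring

lemma k1_nonneg {T : ℝ} (hT : 0 < T) (u : ℝ) : 0 ≤ k1 T u := by
  rcases eq_or_ne u 0 with rfl | hu
  · rw [k1_zero hT]; exact hT.le
  · rw [k1_eq hT hu]
    apply div_nonneg
    · linarith [Real.cos_le_one (T*u)]
    · positivity

lemma k1_ge {T u : ℝ} (hT : 0 < T) (h : |u| ≤ 1/(2*T)) : 2/5 * T ≤ k1 T u := by
  rcases eq_or_ne u 0 with rfl | hu
  · rw [k1_zero hT]; linarith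
  · rw [k1_eq hT hu]
    have hpi : |T * u| ≤ Real.pi := by
      have : |T * u| ≤ 1/2 := by
        rw [abs_mul, abs_of_pos hT]
        calc T * |u| ≤ T * (1/(2*T)) := mul_le_mul_of_nonneg_left h hT.le
          _ = 1/2 := by field_simp
      linarith [Real.pi_gt_three]
    have hcos := Real.cos_le_one_sub_mul_cos_sq hpi
    have hps : (0:ℝ) < Real.pi^2 := by positivity
    have hpi2 : Real.pi^2 ≤ 10 := by
      nlinarith [Real.pi_lt_d2, Real.pi_pos]
    have key : (1:ℝ)/5 ≤ 2/Real.pi^2 := by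
      rw [div_le_div_iff₀ (by norm_num) hps]; linarith
    have h1 : (1/5) * (T*u)^2 ≤ 1 - Real.cos (T*u) := by
      have := mul_le_mul_of_nonneg_right key (sq_nonneg (T*u))
      linarith
    rw [le_div_iff₀ (by positivity : (0:ℝ) < T * u^2)]
    nlinarith [h1, sq_nonneg (T*u)]

lemma integral_cofReal {α : Type*} [MeasurableSpace α] {μ : Measure α} {f : α → ℝ} :
    ∫ x, ((f x : ℝ) : ℂ) ∂μ = ((∫ x, f x ∂μ : ℝ) : ℂ) := integral_ofReal

lemma integral_w_exp {T : ℝ} (hT : 0 < T) (u : ℝ) :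
    ∫ v : ℝ, (w T v : ℂ) * Complex.exp ((v * u : ℝ) * Complex.I) = ((k1 T u : ℝ) : ℂ) := by
  have heq : ∀ v : ℝ, (w T v : ℂ) * Complex.exp ((v * u : ℝ) * Complex.I)
      = ((w T v * Real.cos (v * u) : ℝ) : ℂ)
        + ((w T v * Real.sin (v * u) : ℝ) : ℂ) * Complex.I := by
    intro v
    rw [Complex.exp_mul_I, ← Complex.ofReal_cos, ← Complex.ofReal_sin]
    push_cast
    ring
  simp_rw [heq]
  have h1 : Integrable (fun v => ((w T v * Real.cos (v * u) : ℝ) : ℂ)) volume :=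
    (integrable_w_cos hT u).ofReal
  have h2 : Integrable (fun v => ((w T v * Real.sin (v * u) : ℝ) : ℂ) * Complex.I) volume :=
    ((integrable_w_sin hT u).ofReal).mul_const Complex.I
  rw [integral_add h1 h2, integral_mul_const, integral_cofReal, integral_cofReal,
    integral_w_sin hT u]
  simp [k1]

lemma coord_le_norm {d : ℕ} (u : EuclideanSpace ℝ (Fin d)) (j : Fin d) : |u j| ≤ ‖u‖ := by
  rw [EuclideanSpace.norm_eq, ← Real.sqrt_sq_eq_abs]
  apply Real.sqrt_le_sqrt
  have : (u j)^2 = ‖u j‖^2 := by rw [Real.norm_eq_abs, sq_abs]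
  rw [this]
  exact Finset.single_le_sum (f := fun i => ‖u i‖^2) (fun i _ => sq_nonneg _)
    (Finset.mem_univ j)

lemma measurableSet_cube {d : ℕ} (T : ℝ) : MeasurableSet (cube d T) := by
  have : cube d T = ⋂ j, {t : EuclideanSpace ℝ (Fin d) | |t j| ≤ T} := by
    ext t; simp [cube]
  rw [this]
  refine MeasurableSet.iInter fun j => ?_
  exact measurableSet_le (by fun_prop) measurable_const

lemma cube_subset_ball {d : ℕ} {T : ℝ} (hT : 0 ≤ T) :
    cube d T ⊆ Metric.closedBall 0 (Real.sqrt d * T) := by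
  intro t ht
  rw [Metric.mem_closedBall, dist_zero_right, EuclideanSpace.norm_eq]
  have h1 : ∑ i, ‖t i‖^2 ≤ (d : ℝ) * T^2 := by
    calc ∑ i, ‖t i‖^2 ≤ ∑ _i : Fin d, T^2 := by
          apply Finset.sum_le_sum
          intro i _
          rw [Real.norm_eq_abs]
          exact pow_le_pow_left₀ (abs_nonneg _) (ht i) 2
      _ = (d : ℝ) * T^2 := by rw [Finset.sum_const, Finset.card_univ, Fintype.card_fin]; ring
  calc Real.sqrt (∑ i, ‖t i‖^2) ≤ Real.sqrt ((d : ℝ) * T^2) := Real.sqrt_le_sqrt h1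
    _ = Real.sqrt d * T := by
        rw [Real.sqrt_mul (Nat.cast_nonneg d), Real.sqrt_sq hT]

lemma cube_volume_ne_top {d : ℕ} {T : ℝ} (hT : 0 ≤ T) : volume (cube d T) ≠ ⊤ :=
  ne_of_lt (lt_of_le_of_lt (measure_mono (cube_subset_ball hT))
    measure_closedBall_lt_top)

lemma norm_charF_le_one {d : ℕ} (F : Measure (EuclideanSpace ℝ (Fin d)))
    [IsProbabilityMeasure F] (t : EuclideanSpace ℝ (Fin d)) :
    ‖charF F t‖ ≤ 1 := by
  unfold charF
  calc ‖∫ x, Complex.exp ((⟪t, x⟫ : ℂ) * Complex.I) ∂F‖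
      = ‖∫ x, Complex.exp ((⟪t, x⟫ : ℂ) * Complex.I) ∂F‖ := rfl
    _ ≤ ∫ x, ‖Complex.exp ((⟪t, x⟫ : ℂ) * Complex.I)‖ ∂F := norm_integral_le_integral_norm _
    _ = ∫ _x, (1:ℝ) ∂F := by
        congr 1; funext y
        rw [Complex.norm_exp_ofReal_mul_I]
    _ = 1 := by simp

lemma continuous_charF {d : ℕ} (F : Measure (EuclideanSpace ℝ (Fin d)))
    [IsProbabilityMeasure F] : Continuous (charF F) := by
  unfold charF
  apply continuous_of_dominated (bound := fun _ => (1:ℝ))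
  · intro t
    apply Continuous.aestronglyMeasurable
    exact Complex.continuous_exp.comp
      ((Complex.continuous_ofReal.comp (continuous_const.inner continuous_id)).mul
        continuous_const)
  · intro t
    filter_upwards with y
    rw [Complex.norm_exp_ofReal_mul_I]
  · exact integrable_const 1
  · filter_upwards with y
    exact Complex.continuous_exp.comp
      ((Complex.continuous_ofReal.comp (continuous_id.inner continuous_const)).mul
        continuous_const)

lemma ball_bound {d : ℕ} (F : Measure (EuclideanSpace ℝ (Fin d)))
    [IsProbabilityMeasure F] {τ : ℝ} (hτ : 0 < τ) (x : EuclideanSpace ℝ (Fin d)) :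
    (F (closedBall x (τ / 2))).toReal
      ≤ (5/2)^d * τ^d * ∫ t in cube d (1/τ), ‖charF F t‖ := by
  set T : ℝ := 1/τ with hTdef
  have hT : 0 < T := by positivity
  set Φ : EuclideanSpace ℝ (Fin d) → ℝ := fun t => ∏ j, w T (t j) with hΦ
  have hΦc : Continuous Φ := by
    apply continuous_finset_prod
    intro j _
    exact (continuous_w T).comp (EuclideanSpace.proj (𝕜 := ℝ) j).continuous
  have hΦnn : ∀ t, 0 ≤ Φ t := fun t => Finset.prod_nonneg fun j _ => w_nonneg T _
  have hΦle1 : ∀ t, Φ t ≤ 1 := fun t =>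
    Finset.prod_le_one (fun j _ => w_nonneg T _) (fun j _ => w_le_one hT _)
  have hΦzero : ∀ t ∉ cube d T, Φ t = 0 := by
    intro t ht
    simp only [cube, Set.mem_setOf_eq, not_forall] at ht
    obtain ⟨j, hj⟩ := ht
    exact Finset.prod_eq_zero (Finset.mem_univ j) (w_eq_zero hT (le_of_not_ge hj))
  have hΦint : Integrable Φ := by
    apply hΦc.integrable_of_hasCompactSupport
    apply HasCompactSupport.of_support_subset_isCompact (isCompact_closedBall (0 : EuclideanSpace ℝ (Fin d)) (Real.sqrt d * T))
    intro t ht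
    by_cases hc : t ∈ cube d T
    · exact cube_subset_ball hT.le hc
    · exact absurd (hΦzero t hc) ht
  set G : EuclideanSpace ℝ (Fin d) → EuclideanSpace ℝ (Fin d) → ℂ :=
    fun t y => (Φ t : ℂ) * Complex.exp (((⟪t, y - x⟫ : ℝ) : ℂ) * Complex.I) with hG
  have hGnorm : ∀ t y, ‖G t y‖ = Φ t := by
    intro t y
    rw [hG]
    simp only [norm_mul, Complex.norm_exp_ofReal_mul_I,
      Complex.norm_real, Real.norm_eq_abs, abs_of_nonneg (hΦnn t), mul_one]
  have hGc : Continuous (Function.uncurry G) := by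
    apply Continuous.mul
    · exact Complex.continuous_ofReal.comp (hΦc.comp continuous_fst)
    · apply Complex.continuous_exp.comp
      apply Continuous.mul _ continuous_const
      exact Complex.continuous_ofReal.comp
        ((continuous_fst).inner ((continuous_snd).sub continuous_const))
  have hGint : Integrable (Function.uncurry G) ((volume : Measure (EuclideanSpace ℝ (Fin d))).prod F) := by
    apply Integrable.mono' (g := fun p : EuclideanSpace ℝ (Fin d) × EuclideanSpace ℝ (Fin d) => Φ p.1 * 1)
      (hΦint.mul_prod (integrable_const 1)) hGc.aestronglyMeasurable
    filter_upwards with p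
    rw [mul_one]
    exact le_of_eq (hGnorm p.1 p.2)
  -- inner t-integral equals product of k1's
  have hinner : ∀ y, (∫ t, G t y) = ((∏ j, k1 T ((y - x) j) : ℝ) : ℂ) := by
    intro y
    have h1 : ∀ t : EuclideanSpace ℝ (Fin d),
        G t y = ∏ j, ((w T (t j) : ℂ) * Complex.exp (((t j * (y - x) j : ℝ) : ℂ) * Complex.I)) := by
      intro t
      simp only [hG]
      have hi : (⟪t, y - x⟫ : ℝ) = ∑ j, t j * (y - x) j := by
        simp [PiLp.inner_apply, RCLike.inner_apply, conj_trivial, mul_comm]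
      rw [hi, Finset.prod_mul_distrib, hΦ]
      rw [← Complex.exp_sum]
      push_cast
      rw [Finset.sum_mul]
    simp_rw [h1]
    have hmp := (EuclideanSpace.volume_preserving_symm_measurableEquiv_toLp (Fin d)).symm
    rw [← hmp.integral_comp (MeasurableEquiv.measurableEmbedding _), MeasurableEquiv.symm_symm]
    have h2 : (fun v : Fin d → ℝ =>
          ∏ j, ((w T ((MeasurableEquiv.toLp 2 (Fin d → ℝ) v) j) : ℂ)
            * Complex.exp ((((MeasurableEquiv.toLp 2 (Fin d → ℝ) v) j * (y - x) j : ℝ) : ℂ) * Complex.I)))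
        = fun v : Fin d → ℝ =>
            ∏ j, ((w T (v j) : ℂ) * Complex.exp (((v j * (y - x) j : ℝ) : ℂ) * Complex.I)) := rfl
    rw [show (∫ (v : Fin d → ℝ),
          ∏ j, ((w T ((MeasurableEquiv.toLp 2 (Fin d → ℝ) v) j) : ℂ)
            * Complex.exp ((((MeasurableEquiv.toLp 2 (Fin d → ℝ) v) j * (y - x) j : ℝ) : ℂ) * Complex.I)))
        = ∫ (v : Fin d → ℝ),
            ∏ j, ((w T (v j) : ℂ) * Complex.exp (((v j * (y - x) j : ℝ) : ℂ) * Complex.I))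
      from congrArg _ h2]
    rw [MeasureTheory.integral_fintype_prod_volume_eq_prod (ι := Fin d)
      (f := fun j (v : ℝ) => (w T v : ℂ) * Complex.exp (((v * (y - x) j : ℝ) : ℂ) * Complex.I))]
    rw [Finset.prod_congr rfl fun j _ => integral_w_exp hT ((y - x) j)]
    push_cast
    rfl
  -- the real kernel average
  set h : EuclideanSpace ℝ (Fin d) → ℝ := fun y => ∏ j, k1 T ((y - x) j) with hh
  have hswap := integral_integral_swap hGint
  have hIrepr : (∫ t, ∫ y, G t y ∂F) = ((∫ y, h y ∂F : ℝ) : ℂ) := by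
    rw [hswap]
    simp_rw [hinner]
    exact integral_cofReal
  -- integrability of h with respect to F
  have hint2 : Integrable (fun y => ∫ t, G t y) F := hGint.integral_prod_right
  have hinth : Integrable h F := by
    have h3 : Integrable (fun y => ((h y : ℝ) : ℂ)) F := by
      apply hint2.congr
      filter_upwards with y
      exact hinner y
    have h4 := h3.re
    apply h4.congr
    filter_upwards with y
    simp
  have hhnn : ∀ y, 0 ≤ h y := fun y =>
    Finset.prod_nonneg fun j _ => k1_nonneg hT _
  -- lower bound for the kernel average
  have hlow : (2/5*T)^d * (F (closedBall x (τ/2))).toReal ≤ ∫ y, h y ∂F := by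
    refine le_trans ?_ (setIntegral_le_integral (s := closedBall x (τ/2)) hinth (ae_of_all _ hhnn))
    apply setIntegral_ge_of_const_le_real measurableSet_closedBall (measure_ne_top F _) ?_
      hinth.integrableOn
    intro y hy
    have hyx : ‖y - x‖ ≤ τ/2 := by
      rw [← dist_eq_norm]
      exact Metric.mem_closedBall.1 hy
    have hcoord : ∀ j, |(y - x) j| ≤ 1/(2*T) := by
      intro j
      refine (coord_le_norm _ j).trans (hyx.trans (le_of_eq ?_))
      rw [hTdef]
      field_simp
    calc (2/5*T)^d = ∏ _j : Fin d, (2/5*T) := by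
          rw [Finset.prod_const, Finset.card_univ, Fintype.card_fin]
      _ ≤ ∏ j, k1 T ((y - x) j) := by
          apply Finset.prod_le_prod (fun _ _ => by positivity)
            (fun j _ => k1_ge hT (hcoord j))
  -- rewrite the y-integral of G in terms of charF
  have hGy : ∀ t, (∫ y, G t y ∂F)
      = ((Φ t : ℂ) * Complex.exp (((-⟪t, x⟫ : ℝ) : ℂ) * Complex.I)) * charF F t := by
    intro t
    have hsplit : ∀ y : EuclideanSpace ℝ (Fin d),
        G t y = ((Φ t : ℂ) * Complex.exp (((-⟪t, x⟫ : ℝ) : ℂ) * Complex.I))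
          * Complex.exp (((⟪t, y⟫ : ℝ) : ℂ) * Complex.I) := by
      intro y
      simp only [hG]
      rw [inner_sub_right, mul_assoc, ← Complex.exp_add]
      congr 2
      push_cast
      ring
    simp_rw [hsplit]
    rw [integral_const_mul]
    rfl
  -- upper bound
  have hup : (∫ y, h y ∂F) ≤ ∫ t in cube d T, ‖charF F t‖ := by
    have h5 : (∫ y, h y ∂F) ≤ ‖∫ t, ∫ y, G t y ∂F‖ := by
      rw [hIrepr]
      rw [Complex.norm_real, Real.norm_eq_abs]
      exact le_abs_self _
    have h6 : ‖∫ t, ∫ y, G t y ∂F‖ ≤ ∫ t, Φ t * ‖charF F t‖ := by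
      refine (norm_integral_le_integral_norm _).trans (le_of_eq ?_)
      congr 1
      funext t
      rw [hGy t]
      simp only [norm_mul, Complex.norm_exp_ofReal_mul_I,
        Complex.norm_real, Real.norm_eq_abs, abs_of_nonneg (hΦnn t), mul_one]
    have h7 : (∫ t, Φ t * ‖charF F t‖)
        = ∫ t in cube d T, Φ t * ‖charF F t‖ := by
      rw [← integral_indicator (measurableSet_cube T)]
      congr 1
      funext t
      by_cases ht : t ∈ cube d T
      · rw [Set.indicator_of_mem ht]
      · rw [Set.indicator_of_notMem ht, hΦzero t ht, zero_mul]
    have habs : Continuous (fun t : EuclideanSpace ℝ (Fin d) => ‖charF F t‖) :=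
      continuous_norm.comp (continuous_charF F)
    have hchint : IntegrableOn (fun t => ‖charF F t‖) (cube d T) := by
      apply Measure.integrableOn_of_bounded (cube_volume_ne_top hT.le)
        habs.aestronglyMeasurable
      filter_upwards with t
      rw [Real.norm_eq_abs, abs_of_nonneg (norm_nonneg _)]
      exact norm_charF_le_one F t
    have hprodint : IntegrableOn (fun t => Φ t * ‖charF F t‖) (cube d T) := by
      apply hchint.mono' ((hΦc.mul habs).aestronglyMeasurable).restrict
      filter_upwards with t
      rw [Pi.mul_apply, Real.norm_eq_abs, abs_of_nonneg (mul_nonneg (hΦnn t) (norm_nonneg _))]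
      exact mul_le_of_le_one_left (norm_nonneg _) (hΦle1 t)
    have h8 : (∫ t in cube d T, Φ t * ‖charF F t‖)
        ≤ ∫ t in cube d T, ‖charF F t‖ := by
      apply setIntegral_mono_on hprodint hchint (measurableSet_cube T)
      intro t _
      exact mul_le_of_le_one_left (norm_nonneg _) (hΦle1 t)
    calc (∫ y, h y ∂F) ≤ ‖∫ t, ∫ y, G t y ∂F‖ := h5
      _ ≤ ∫ t, Φ t * ‖charF F t‖ := h6
      _ = ∫ t in cube d T, Φ t * ‖charF F t‖ := h7
      _ ≤ ∫ t in cube d T, ‖charF F t‖ := h8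
  -- combine
  have hchain : (2/5*T)^d * (F (closedBall x (τ/2))).toReal
      ≤ ∫ t in cube d T, ‖charF F t‖ := hlow.trans hup
  have hc : (0:ℝ) < (2/5*T)^d * ((5/2)^d * τ^d) := by positivity
  have hkey : (2/5*T)^d * ((5/2)^d * τ^d) = 1 := by
    rw [← mul_pow, ← mul_pow]
    rw [show (2/5*T) * (5/2*τ) = 1 by rw [hTdef]; field_simp]
    exact one_pow d
  have := mul_le_mul_of_nonneg_left hchain (le_of_lt (by positivity :
    (0:ℝ) < (5/2)^d * τ^d))
  calc (F (closedBall x (τ/2))).toReal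
      = ((5/2)^d * τ^d) * ((2/5*T)^d * (F (closedBall x (τ/2))).toReal) := by
        rw [← mul_assoc, mul_comm ((5/2)^d * τ^d) ((2/5*T)^d), hkey, one_mul]
    _ ≤ ((5/2)^d * τ^d) * ∫ t in cube d T, ‖charF F t‖ := this
    _ = (5/2)^d * τ^d * ∫ t in cube d (1/τ), ‖charF F t‖ := by rw [← hTdef]

end Esseen

/-- **Multivariate Esséen inequality.** For any probability measure `F` on `ℝ^d` and `τ > 0`,
`Q(F, τ) ≤ c(d) τ^d ∫_{|t| ≤ 1/τ} |F̂(t)| dt`. -/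
theorem stmt_4 (d : ℕ) (hd : 0 < d) :
    ∃ C : ℝ, 0 < C ∧
      ∀ (F : Measure (EuclideanSpace ℝ (Fin d))), IsProbabilityMeasure F →
      ∀ τ : ℝ, 0 < τ →
        concQ F τ ≤ C * τ ^ d * ∫ t in cube d (1 / τ), ‖charF F t‖ := by
  refine ⟨(5/2)^d, by positivity, ?_⟩
  intro F hF τ hτ
  haveI := hF
  apply ciSup_le
  intro x
  exact Esseen.ball_bound F hτ x
end
end

section
/- Let W be a probability measure on ℝ, let λ, T > 0, and let a₁, …, a_n ∈ ℝ^d. Then log ∫_{|t| ≤ T} exp(−(1/2) Σ_{k=1}^n ∫_ℝ (1 − cos(⟨t, a_k⟩ z)) λ W(dz)) dt ≤ ∫_ℝ [ log ∫_{|t| ≤ T} exp(−(λ/2) Σ_{k=1}^n (1 − cos(⟨t, a_k⟩ z))) dt ] W(dz), where |t| = max_j |t_j|. -/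
open MeasureTheory ProbabilityTheory Metric
open scoped BigOperators RealInnerProductSpace

noncomputable section

lemma jensen_aux {d : ℕ} (μ : Measure (EuclideanSpace ℝ (Fin d))) [IsFiniteMeasure μ]
    (hμ : μ ≠ 0) (W : Measure ℝ) [IsProbabilityMeasure W]
    (f : EuclideanSpace ℝ (Fin d) → ℝ → ℝ) (hf : Continuous (Function.uncurry f))
    (M : ℝ) (hM : 0 ≤ M) (hlb : ∀ t z, -M ≤ f t z) (hub : ∀ t z, f t z ≤ 0) :
    Real.log (∫ t, Real.exp (∫ z, f t z ∂W) ∂μ) ≤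
      ∫ z, Real.log (∫ t, Real.exp (f t z) ∂μ) ∂W := by
  set v : ℝ := (μ Set.univ).toReal with hv_def
  have hv : 0 < v := by
    refine ENNReal.toReal_pos ?_ (measure_ne_top μ _)
    simpa [Measure.measure_univ_eq_zero] using hμ
  have hfc : ∀ z, Continuous fun t => f t z := fun z =>
    hf.comp (continuous_id.prodMk continuous_const)
  have hfz : ∀ t, Continuous fun z => f t z := fun t =>
    hf.comp (continuous_const.prodMk continuous_id)
  have habs : ∀ t z, |f t z| ≤ M := fun t z =>
    abs_le.mpr ⟨hlb t z, (hub t z).trans hM⟩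
  set c0 : ℝ := v * Real.exp (-M) with hc0_def
  have hc0 : 0 < c0 := mul_pos hv (Real.exp_pos _)
  set C : ℝ → ℝ := fun z => ∫ t, Real.exp (f t z) ∂μ with hC_def
  have hexp_ub : ∀ t z, Real.exp (f t z) ≤ 1 := fun t z =>
    Real.exp_le_one_iff.mpr (hub t z)
  have hintC : ∀ z, Integrable (fun t => Real.exp (f t z)) μ := fun z => by
    refine Integrable.mono' (integrable_const 1)
      (Real.continuous_exp.comp (hfc z)).aestronglyMeasurable
      (Filter.Eventually.of_forall fun t => ?_)
    rw [Real.norm_eq_abs, abs_of_pos (Real.exp_pos _)]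
    exact hexp_ub t z
  have hClb : ∀ z, c0 ≤ C z := by
    intro z
    have h1 : ∫ (_ : EuclideanSpace ℝ (Fin d)), Real.exp (-M) ∂μ = c0 := by
      simp [integral_const, smul_eq_mul, hc0_def, hv_def, mul_comm, measureReal_def]
    rw [← h1]
    exact integral_mono (integrable_const _) (hintC z)
      (fun t => Real.exp_le_exp.mpr (hlb t z))
  have hCub : ∀ z, C z ≤ v := by
    intro z
    have h1 : ∫ (_ : EuclideanSpace ℝ (Fin d)), (1 : ℝ) ∂μ = v := by
      rw [integral_const, smul_eq_mul, mul_one, measureReal_def]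
    rw [← h1]
    exact integral_mono (hintC z) (integrable_const _) (fun t => hexp_ub t z)
  have hCpos : ∀ z, 0 < C z := fun z => lt_of_lt_of_le hc0 (hClb z)
  have hCcont : Continuous C := by
    refine continuous_of_dominated
      (fun z => (Real.continuous_exp.comp (hfc z)).aestronglyMeasurable)
      (fun z => Filter.Eventually.of_forall fun t => ?_)
      (integrable_const (1 : ℝ))
      (Filter.Eventually.of_forall fun t =>
        Real.continuous_exp.comp (hfz t))
    rw [Real.norm_eq_abs, abs_of_pos (Real.exp_pos _)]
    exact hexp_ub t z
  have hlogCcont : Continuous fun z => Real.log (C z) :=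
    Real.continuousOn_log.comp_continuous hCcont fun z => by
      simpa using (hCpos z).ne'
  have hlogC_lb : ∀ z, Real.log c0 ≤ Real.log (C z) := fun z =>
    Real.log_le_log hc0 (hClb z)
  have hlogC_ub : ∀ z, Real.log (C z) ≤ Real.log v := fun z =>
    Real.log_le_log (hCpos z) (hCub z)
  have hlogCint : Integrable (fun z => Real.log (C z)) W := by
    refine Integrable.mono' (integrable_const (|Real.log c0| + |Real.log v|))
      hlogCcont.aestronglyMeasurable (Filter.Eventually.of_forall fun z => ?_)
    rw [Real.norm_eq_abs]
    refine abs_le.mpr ⟨?_, ?_⟩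
    · have := hlogC_lb z
      have h2 : -(|Real.log c0| + |Real.log v|) ≤ Real.log c0 := by
        have := neg_abs_le (Real.log c0)
        have := abs_nonneg (Real.log v)
        linarith
      linarith
    · have := hlogC_ub z
      have h2 : Real.log v ≤ |Real.log c0| + |Real.log v| := by
        have := le_abs_self (Real.log v)
        have := abs_nonneg (Real.log c0)
        linarith
      linarith
  set I : ℝ := ∫ z, Real.log (C z) ∂W with hI_def
  set g : EuclideanSpace ℝ (Fin d) → ℝ := fun t => ∫ z, f t z ∂W with hg_def
  have hfint_z : ∀ t, Integrable (fun z => f t z) W := fun t => by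
    refine Integrable.mono' (integrable_const M) (hfz t).aestronglyMeasurable
      (Filter.Eventually.of_forall fun z => ?_)
    rw [Real.norm_eq_abs]; exact habs t z
  have hgcont : Continuous g := by
    refine continuous_of_dominated
      (fun t => (hfz t).aestronglyMeasurable)
      (fun t => Filter.Eventually.of_forall fun z => ?_)
      (integrable_const M)
      (Filter.Eventually.of_forall fun z => hfc z)
    rw [Real.norm_eq_abs]; exact habs t z
  have hg_lb : ∀ t, -M ≤ g t := by
    intro t
    have h1 : ∫ (_ : ℝ), (-M) ∂W = -M := by simp
    rw [← h1]
    exact integral_mono (integrable_const _) (hfint_z t) (fun z => hlb t z)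
  have hg_ub : ∀ t, g t ≤ 0 := fun t =>
    integral_nonpos (fun z => hub t z)
  -- Step A: pointwise Jensen
  have stepA : ∀ t, Real.exp (g t) ≤
      Real.exp I * ∫ z, Real.exp (f t z) / C z ∂W := by
    intro t
    have h1 : Integrable (fun z => f t z - Real.log (C z)) W :=
      (hfint_z t).sub hlogCint
    have hcont2 : Continuous fun z => Real.exp (f t z - Real.log (C z)) :=
      Real.continuous_exp.comp ((hfz t).sub hlogCcont)
    have h2 : Integrable (fun z => Real.exp (f t z - Real.log (C z))) W := by
      refine Integrable.mono' (integrable_const (Real.exp (-Real.log c0)))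
        hcont2.aestronglyMeasurable (Filter.Eventually.of_forall fun z => ?_)
      rw [Real.norm_eq_abs, abs_of_pos (Real.exp_pos _)]
      apply Real.exp_le_exp.mpr
      have := hub t z
      have := hlogC_lb z
      linarith
    have hJ : Real.exp (∫ z, (f t z - Real.log (C z)) ∂W) ≤
        ∫ z, Real.exp (f t z - Real.log (C z)) ∂W := by
      have := convexOn_exp.map_integral_le (μ := W)
        Real.continuous_exp.continuousOn isClosed_univ
        (Filter.Eventually.of_forall fun _ => Set.mem_univ _) h1 h2
      simpa using this
    have hsub : ∫ z, (f t z - Real.log (C z)) ∂W = g t - I :=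
      integral_sub (hfint_z t) hlogCint
    have hratio : (fun z => Real.exp (f t z - Real.log (C z))) =
        fun z => Real.exp (f t z) / C z := by
      funext z
      rw [Real.exp_sub, Real.exp_log (hCpos z)]
    rw [hsub, hratio] at hJ
    have := mul_le_mul_of_nonneg_right hJ (le_of_lt (Real.exp_pos I))
    rwa [← Real.exp_add, sub_add_cancel, mul_comm (∫ z, Real.exp (f t z) / C z ∂W)] at this
  -- Fubini setup
  set u : EuclideanSpace ℝ (Fin d) × ℝ → ℝ := fun p => Real.exp (f p.1 p.2) / C p.2
    with hu_def
  have hu_cont : Continuous u :=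
    (Real.continuous_exp.comp hf).div (hCcont.comp continuous_snd)
      (fun p => (hCpos p.2).ne')
  have hu_bound : ∀ p, ‖u p‖ ≤ 1 / c0 := by
    intro p
    rw [Real.norm_eq_abs, abs_of_nonneg (div_nonneg (Real.exp_pos _).le (hCpos _).le)]
    exact div_le_div₀ (by norm_num) (hexp_ub p.1 p.2) hc0 (hClb p.2)
  have hu_int : Integrable u (μ.prod W) :=
    Integrable.mono' (integrable_const (1 / c0)) hu_cont.aestronglyMeasurable
      (Filter.Eventually.of_forall hu_bound)
  have hswap : ∫ t, ∫ z, Real.exp (f t z) / C z ∂W ∂μ =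
      ∫ z, ∫ t, Real.exp (f t z) / C z ∂μ ∂W :=
    integral_integral_swap hu_int
  have hinner : ∀ z, ∫ t, Real.exp (f t z) / C z ∂μ = 1 := by
    intro z
    rw [integral_div, div_self (hCpos z).ne']
  -- LHS integrability & positivity
  have hL_int : Integrable (fun t => Real.exp (g t)) μ := by
    refine Integrable.mono' (integrable_const 1)
      (Real.continuous_exp.comp hgcont).aestronglyMeasurable
      (Filter.Eventually.of_forall fun t => ?_)
    rw [Real.norm_eq_abs, abs_of_pos (Real.exp_pos _)]
    exact Real.exp_le_one_iff.mpr (hg_ub t)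
  have hR_int : Integrable (fun t => Real.exp I * ∫ z, Real.exp (f t z) / C z ∂W) μ :=
    (hu_int.integral_prod_left).const_mul _
  have hLB : ∫ t, Real.exp (g t) ∂μ ≤ Real.exp I := by
    calc ∫ t, Real.exp (g t) ∂μ
        ≤ ∫ t, Real.exp I * ∫ z, Real.exp (f t z) / C z ∂W ∂μ :=
          integral_mono hL_int hR_int stepA
      _ = Real.exp I * ∫ t, ∫ z, Real.exp (f t z) / C z ∂W ∂μ := integral_const_mul _ _
      _ = Real.exp I * ∫ z, ∫ t, Real.exp (f t z) / C z ∂μ ∂W := by rw [hswap]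
      _ = Real.exp I := by
          simp only [hinner]
          simp
  have hLpos : 0 < ∫ t, Real.exp (g t) ∂μ := by
    have h1 : ∫ (_ : EuclideanSpace ℝ (Fin d)), Real.exp (-M) ∂μ = c0 := by
      simp [integral_const, smul_eq_mul, hc0_def, hv_def, mul_comm, measureReal_def]
    have h2 : c0 ≤ ∫ t, Real.exp (g t) ∂μ := by
      rw [← h1]
      exact integral_mono (integrable_const _) hL_int
        (fun t => Real.exp_le_exp.mpr (hg_lb t))
    linarith
  exact (Real.log_le_iff_le_exp hLpos).mpr hLB

/-- Jensen-type inequality \eqref{dd11}: for any probability measure `W` on `ℝ` and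
`λ, T > 0`,
`log ∫_{|t|≤T} exp(-(1/2) Σ_k ∫ (1 - cos(⟨t,a_k⟩z)) λ W(dz)) dt
  ≤ ∫ [log ∫_{|t|≤T} exp(-(λ/2) Σ_k (1 - cos(⟨t,a_k⟩z))) dt] W(dz)`. -/
theorem stmt_7 (d n : ℕ) (a : Fin n → EuclideanSpace ℝ (Fin d))
    (W : Measure ℝ) [IsProbabilityMeasure W] (lam T : ℝ) (hlam : 0 < lam) (hT : 0 < T) :
    Real.log (∫ t in cube d T,
        Real.exp (-(1 / 2) * ∑ k, ∫ z, (1 - Real.cos (⟪t, a k⟫ * z)) * lam ∂W)) ≤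
      ∫ z, Real.log (∫ t in cube d T,
        Real.exp (-(lam / 2) * ∑ k, (1 - Real.cos (⟪t, a k⟫ * z)))) ∂W := by
  have hcoord : ∀ (t : EuclideanSpace ℝ (Fin d)) (j : Fin d), |t j| ≤ ‖t‖ := by
    intro t j
    rw [EuclideanSpace.norm_eq]
    have h1 : |t j| = Real.sqrt (‖t j‖ ^ 2) := by
      rw [Real.sqrt_sq_eq_abs, Real.norm_eq_abs, abs_abs]
    rw [h1]
    apply Real.sqrt_le_sqrt
    exact Finset.single_le_sum (f := fun i => ‖t i‖ ^ 2)
      (fun i _ => by positivity) (Finset.mem_univ j)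
  have hcube_closed : IsClosed (cube d T) := by
    have h : cube d T = ⋂ j, (fun t : EuclideanSpace ℝ (Fin d) => |t j|) ⁻¹' Set.Iic T := by
      ext t; simp [cube, Set.mem_iInter]
    rw [h]
    refine isClosed_iInter fun j => IsClosed.preimage ?_ isClosed_Iic
    exact continuous_abs.comp ((EuclideanSpace.proj j).continuous)
  have hcube_bdd : Bornology.IsBounded (cube d T) := by
    refine (Metric.isBounded_closedBall (x := (0 : EuclideanSpace ℝ (Fin d)))
      (r := Real.sqrt d * T)).subset ?_
    intro t ht
    rw [Metric.mem_closedBall, dist_zero_right, EuclideanSpace.norm_eq]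
    have h2 : ∑ i, ‖t i‖ ^ 2 ≤ (d : ℝ) * T ^ 2 := by
      calc ∑ i, ‖t i‖ ^ 2 ≤ ∑ _i : Fin d, T ^ 2 := by
            refine Finset.sum_le_sum fun i _ => ?_
            have := ht i
            rw [Real.norm_eq_abs]
            nlinarith [abs_nonneg (t i)]
        _ = (d : ℝ) * T ^ 2 := by simp [mul_comm]
    calc Real.sqrt (∑ i, ‖t i‖ ^ 2) ≤ Real.sqrt ((d : ℝ) * T ^ 2) :=
          Real.sqrt_le_sqrt h2
      _ = Real.sqrt d * T := by
          rw [Real.sqrt_mul (by positivity), Real.sqrt_sq hT.le]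
  have hfin : volume (cube d T) < ⊤ :=
    (Metric.isCompact_of_isClosed_isBounded hcube_closed hcube_bdd).measure_lt_top
  haveI : IsFiniteMeasure (volume.restrict (cube d T)) :=
    ⟨by rwa [Measure.restrict_apply_univ]⟩
  have hball : Metric.closedBall (0 : EuclideanSpace ℝ (Fin d)) T ⊆ cube d T := by
    intro t ht j
    rw [Metric.mem_closedBall, dist_zero_right] at ht
    exact (hcoord t j).trans ht
  have hpos : 0 < volume (cube d T) :=
    lt_of_lt_of_le (Metric.measure_closedBall_pos volume 0 hT) (measure_mono hball)
  have hne : volume.restrict (cube d T) ≠ 0 := by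
    intro h
    rw [← Measure.restrict_apply_univ (cube d T)] at hpos
    simp [h] at hpos
  have hcont : Continuous (Function.uncurry fun (t : EuclideanSpace ℝ (Fin d)) (z : ℝ) =>
      -(lam / 2) * ∑ k, (1 - Real.cos (⟪t, a k⟫ * z))) := by
    apply Continuous.mul continuous_const
    refine continuous_finset_sum _ fun k _ => Continuous.sub continuous_const ?_
    exact Real.continuous_cos.comp ((continuous_fst.inner continuous_const).mul continuous_snd)
  have hSbound : ∀ (t : EuclideanSpace ℝ (Fin d)) (z : ℝ),
      (0 : ℝ) ≤ ∑ k, (1 - Real.cos (⟪t, a k⟫ * z)) ∧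
      ∑ k, (1 - Real.cos (⟪t, a k⟫ * z)) ≤ 2 * n := by
    intro t z
    constructor
    · exact Finset.sum_nonneg fun k _ => by nlinarith [Real.cos_le_one (⟪t, a k⟫ * z)]
    · calc ∑ k, (1 - Real.cos (⟪t, a k⟫ * z)) ≤ ∑ _k : Fin n, (2 : ℝ) := by
            refine Finset.sum_le_sum fun k _ => ?_
            nlinarith [Real.neg_one_le_cos (⟪t, a k⟫ * z)]
        _ = 2 * n := by simp [mul_comm]
  have hlb : ∀ (t : EuclideanSpace ℝ (Fin d)) (z : ℝ),
      -(lam * n) ≤ -(lam / 2) * ∑ k, (1 - Real.cos (⟪t, a k⟫ * z)) := by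
    intro t z
    have := (hSbound t z).2
    nlinarith
  have hub : ∀ (t : EuclideanSpace ℝ (Fin d)) (z : ℝ),
      -(lam / 2) * ∑ k, (1 - Real.cos (⟪t, a k⟫ * z)) ≤ 0 := by
    intro t z
    have := (hSbound t z).1
    nlinarith
  have key : ∀ t : EuclideanSpace ℝ (Fin d),
      -(1 / 2 : ℝ) * ∑ k, ∫ z, (1 - Real.cos (⟪t, a k⟫ * z)) * lam ∂W =
      ∫ z, -(lam / 2) * ∑ k, (1 - Real.cos (⟪t, a k⟫ * z)) ∂W := by
    intro t
    have hik : ∀ k : Fin n, Integrable (fun z => (1 - Real.cos (⟪t, a k⟫ * z)) * lam) W := by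
      intro k
      refine Integrable.mono' (integrable_const (2 * lam))
        ((Continuous.sub continuous_const
          (Real.continuous_cos.comp (continuous_const.mul continuous_id))).mul
          continuous_const).aestronglyMeasurable
        (Filter.Eventually.of_forall fun z => ?_)
      rw [Real.norm_eq_abs, abs_mul, abs_of_pos hlam]
      have h1 : |1 - Real.cos (⟪t, a k⟫ * z)| ≤ 2 := by
        have := Real.cos_le_one (⟪t, a k⟫ * z)
        have := Real.neg_one_le_cos (⟪t, a k⟫ * z)
        rw [abs_le]; constructor <;> linarith
      nlinarith
    rw [← integral_finset_sum _ (fun k _ => hik k), ← MeasureTheory.integral_const_mul]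
    congr 1
    funext z
    rw [← Finset.sum_mul]
    ring
  simp only [key]
  exact jensen_aux _ hne W _ hcont (lam * n) (by positivity) hlb hub
end
end
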